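/- Shao's similarity lemma: Let A be a cubical r-matrix of order n over ℂ and let z = (z₁,...,z_n) be a vector with nonzero complex entries. Define B by b_{j₁,...,j_r} = z_{j₁}^{-r} a_{j₁,...,j_r} z_{j₁}···z_{j_r}. Then λ is an eigenvalue of A with eigenvector x if and only if λ is an eigenvalue of B with eigenvector (x₁/z₁, ..., x_n/z_n). In particular A and B have the same eigenvalues. -/

import Mathlib

open Finset

/-- `λ` is an eigenvalue of the cubical `r`-matrix `A` with eigenvector `x`. -/
def IsEigenpair {r n : ℕ} (hr : 0 < r) (A : (Fin r → Fin n) → ℂ)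
    (lam : ℂ) (x : Fin n → ℂ) : Prop :=
  x ≠ 0 ∧ ∀ k : Fin n, lam * x k ^ (r - 1) =
    ∑ i : Fin r → Fin n, if i ⟨0, hr⟩ = k then
      A i * ∏ j ∈ Finset.univ.erase (⟨0, hr⟩ : Fin r), x (i j) else 0

theorem shao_similarity (r n : ℕ) (hr : 0 < r) (A : (Fin r → Fin n) → ℂ)
    (z : Fin n → ℂ) (hz : ∀ k, z k ≠ 0)
    (B : (Fin r → Fin n) → ℂ)
    (hB : B = fun i => (z (i ⟨0, hr⟩))⁻¹ ^ r * A i * ∏ j : Fin r, z (i j)) :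
    (∀ (lam : ℂ) (x : Fin n → ℂ),
        IsEigenpair hr A lam x ↔ IsEigenpair hr B lam (fun k => x k / z k)) ∧
      (∀ lam : ℂ, (∃ x, IsEigenpair hr A lam x) ↔ ∃ y, IsEigenpair hr B lam y) := by
  have key : ∀ (lam : ℂ) (x : Fin n → ℂ),
      IsEigenpair hr A lam x ↔ IsEigenpair hr B lam (fun k => x k / z k) := by
    intro lam x
    unfold IsEigenpair
    apply and_congr
    · constructor
      · intro h h'
        apply h
        funext k
        have := congrFun h' k
        simp only [Pi.zero_apply, div_eq_zero_iff] at this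
        simp [this.resolve_right (hz k)]
      · intro h h'
        subst h'
        exact h (funext fun k => by simp)
    · refine forall_congr' fun k => ?_
      have hsum : (∑ i : Fin r → Fin n, if i ⟨0, hr⟩ = k then
            B i * ∏ j ∈ Finset.univ.erase (⟨0, hr⟩ : Fin r), x (i j) / z (i j) else 0)
          = (z k)⁻¹ ^ (r - 1) * ∑ i : Fin r → Fin n, if i ⟨0, hr⟩ = k then
            A i * ∏ j ∈ Finset.univ.erase (⟨0, hr⟩ : Fin r), x (i j) else 0 := by
        rw [Finset.mul_sum]
        refine Finset.sum_congr rfl fun i _ => ?_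
        split
        · next h =>
          subst hB
          simp only []
          rw [h]
          rw [← Finset.mul_prod_erase Finset.univ (fun j => z (i j)) (Finset.mem_univ ⟨0, hr⟩), h]
          rw [Finset.prod_div_distrib]
          have hP : (∏ j ∈ Finset.univ.erase (⟨0, hr⟩ : Fin r), z (i j)) ≠ 0 :=
            Finset.prod_ne_zero_iff.mpr fun j _ => hz _
          have hzr : (z k)⁻¹ ^ r * z k = (z k)⁻¹ ^ (r - 1) := by
            conv_lhs => rw [(Nat.succ_pred_eq_of_pos hr).symm]
            rw [pow_succ, mul_assoc, inv_mul_cancel₀ (hz k), mul_one]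
            rfl
          rw [div_eq_mul_inv]
          calc (z k)⁻¹ ^ r * A i * (z k * ∏ j ∈ Finset.univ.erase (⟨0, hr⟩ : Fin r), z (i j)) *
                ((∏ j ∈ Finset.univ.erase (⟨0, hr⟩ : Fin r), x (i j)) *
                  (∏ j ∈ Finset.univ.erase (⟨0, hr⟩ : Fin r), z (i j))⁻¹)
              = ((z k)⁻¹ ^ r * z k) * (A i * ∏ j ∈ Finset.univ.erase (⟨0, hr⟩ : Fin r), x (i j)) *
                ((∏ j ∈ Finset.univ.erase (⟨0, hr⟩ : Fin r), z (i j)) *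
                  (∏ j ∈ Finset.univ.erase (⟨0, hr⟩ : Fin r), z (i j))⁻¹) := by ring
            _ = _ := by rw [hzr, mul_inv_cancel₀ hP, mul_one]
        · simp
      rw [hsum]
      have hL : lam * (x k / z k) ^ (r - 1) = (z k)⁻¹ ^ (r - 1) * (lam * x k ^ (r - 1)) := by
        rw [div_pow]
        field_simp
        rw [one_div, inv_pow, div_eq_mul_inv]
      rw [hL]
      exact (mul_right_inj' (pow_ne_zero _ (inv_ne_zero (hz k)))).symm
  refine ⟨key, fun lam => ⟨fun ⟨x, hx⟩ => ⟨_, (key lam x).mp hx⟩, fun ⟨y, hy⟩ => ?_⟩⟩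
  refine ⟨fun k => y k * z k, (key lam (fun k => y k * z k)).mpr ?_⟩
  have : (fun k => (y k * z k) / z k) = y := by
    funext k; exact mul_div_cancel_right₀ _ (hz k)
  rwa [this]
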